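/- Let X be a rank one normal projective surface with quotient singularities such that K_X is not numerically trivial, let π : Y → X be the minimal resolution with exceptional curves E₁, ..., E_r, and let R + ⟨K_Y⟩ be the sublattice of H²(Y, ℤ)/torsion spanned by K_Y, E₁, ..., E_r. Then |det(R + ⟨K_Y⟩)| is the square of an integer. -/

import Mathlib

open Matrix

/-- If the Gram matrix `G` of `(K_Y, E₁, …, E_r)` (integer intersection-number
matrix) is expressed as `Aᵀ U A` with `A` a rational matrix and `U` the Gram
matrix of an integral basis of the unimodular lattice `H²(Y,ℤ)/torsion`
(`det U = ±1`), then `|det G|` is the square of an integer. -/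
theorem stmt_6 (r : ℕ) (G U : Matrix (Fin (r + 1)) (Fin (r + 1)) ℤ)
    (A : Matrix (Fin (r + 1)) (Fin (r + 1)) ℚ)
    (hU : U.det = 1 ∨ U.det = -1)
    (hG : G.map (Int.cast : ℤ → ℚ) = Aᵀ * U.map (Int.cast : ℤ → ℚ) * A) :
    ∃ k : ℤ, |G.det| = k ^ 2 := by
  have hdet : (G.det : ℚ) = A.det ^ 2 * (U.det : ℚ) := by
    have hU' : ((U.map (Int.cast : ℤ → ℚ)).det : ℚ) = (U.det : ℚ) :=
      (RingHom.map_det (Int.castRingHom ℚ) U).symm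
    calc (G.det : ℚ) = ((G.map (Int.cast : ℤ → ℚ)).det : ℚ) :=
          RingHom.map_det (Int.castRingHom ℚ) G
      _ = A.det * (U.map (Int.cast : ℤ → ℚ)).det * A.det := by
          simpa using congrArg Matrix.det hG
      _ = A.det ^ 2 * (U.det : ℚ) := by rw [hU']; ring
  -- So A.det ^ 2 = ± (G.det : ℚ), an integer, hence A.det is an integer.
  have hsq : (A.det) ^ 2 = ((|G.det| : ℤ) : ℚ) := by
    rcases hU with h | h <;> rw [h] at hdet <;> push_cast at hdet
    · have : (0:ℚ) ≤ (G.det : ℚ) := by push_cast; rw [hdet]; positivity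
      have hnn : (0:ℤ) ≤ G.det := by exact_mod_cast this
      rw [abs_of_nonneg hnn]; push_cast; linarith [hdet]
    · have : (G.det : ℚ) ≤ 0 := by
        push_cast; rw [hdet]; nlinarith [sq_nonneg A.det]
      have hnp : G.det ≤ 0 := by exact_mod_cast this
      rw [abs_of_nonpos hnp]; push_cast; linarith [hdet]
  -- A.det has denominator 1
  have hden : (A.det ^ 2).den = 1 := by rw [hsq]; exact Rat.den_intCast _
  have hden1 : A.det.den = 1 := by
    have := Rat.den_pow A.det 2
    rw [hden] at this
    nlinarith [A.det.den.pos_of_ne_zero, this.symm]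
  refine ⟨A.det.num, ?_⟩
  have hA : (A.det : ℚ) = (A.det.num : ℚ) := by
    conv_lhs => rw [← Rat.num_div_den A.det]
    rw [hden1]; simp
  rw [hA] at hsq
  exact_mod_cast hsq.symm
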